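/- arXiv:2007.13611 — 2 statements merged into one kernel-verified Lean document; each statement's English description precedes it below -/
import Mathlib

section
/- Let G be the cycle graph on n ≥ 3 vertices. Then the characteristic polynomial of B equals (X^n − 1)²; consequently the eigenvalues of B are exactly the n-th roots of unity, each with algebraic multiplicity 2. Moreover, for every λ ∈ ℂ with λ^n = 1 the eigenspace ker(B − λI) has dimension 2, and B is diagonalizable over ℂ. -/
open Matrix Polynomial BigOperators

variable {V : Type*}

/-- The non-backtracking matrix of a graph `G`, indexed by darts (oriented edges):
`B[(k→l),(i→j)] = 1` if `j = k` and `i ≠ l`, else `0`. -/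
def nbMatrix [DecidableEq V] (G : SimpleGraph V) : Matrix G.Dart G.Dart ℂ :=
  fun e f => if f.snd = e.fst ∧ f.fst ≠ e.snd then 1 else 0

def nbMatrix' [DecidableEq V] (G : SimpleGraph V) : Matrix G.Dart G.Dart ℂ :=
  fun e f => if f.snd = e.fst ∧ f.fst ≠ e.snd then 1 else 0

namespace NBHelper

open SimpleGraph Finset

variable [DecidableEq V] [Fintype V] {G : SimpleGraph V} [DecidableRel G.Adj]

lemma exists_unique_pred (hreg : ∀ v : V, G.degree v = 2) (e : G.Dart) :
    ∃! f : G.Dart, f.snd = e.fst ∧ f.fst ≠ e.snd := by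
  have hcard : (G.neighborFinset e.fst).card = 2 := hreg e.fst
  have hmem : e.snd ∈ G.neighborFinset e.fst := (G.mem_neighborFinset _ _).2 e.adj
  have h1 : ((G.neighborFinset e.fst).erase e.snd).card = 1 := by
    rw [Finset.card_erase_of_mem hmem, hcard]
  obtain ⟨w, hw⟩ := Finset.card_eq_one.mp h1
  have hwmem : w ∈ (G.neighborFinset e.fst).erase e.snd := by
    rw [hw]; exact Finset.mem_singleton_self w
  have hwadj : G.Adj e.fst w := (G.mem_neighborFinset _ _).1 (Finset.mem_of_mem_erase hwmem)
  have hwne : w ≠ e.snd := Finset.ne_of_mem_erase hwmem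
  refine ⟨⟨(w, e.fst), hwadj.symm⟩, ⟨rfl, hwne⟩, ?_⟩
  rintro g ⟨h1', h2'⟩
  have hg : g.fst ∈ (G.neighborFinset e.fst).erase e.snd := by
    rw [Finset.mem_erase]
    exact ⟨h2', (G.mem_neighborFinset _ _).2 (h1' ▸ g.adj).symm⟩
  rw [hw, Finset.mem_singleton] at hg
  exact Dart.ext _ _ (Prod.ext hg h1')

noncomputable def pd (hreg : ∀ v : V, G.degree v = 2) (e : G.Dart) : G.Dart :=
  (exists_unique_pred hreg e).choose

lemma pd_snd (hreg : ∀ v : V, G.degree v = 2) (e : G.Dart) :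
    (pd hreg e).snd = e.fst := (exists_unique_pred hreg e).choose_spec.1.1

lemma pd_fst_ne (hreg : ∀ v : V, G.degree v = 2) (e : G.Dart) :
    (pd hreg e).fst ≠ e.snd := (exists_unique_pred hreg e).choose_spec.1.2

lemma pd_eq (hreg : ∀ v : V, G.degree v = 2) {e f : G.Dart}
    (h1 : f.snd = e.fst) (h2 : f.fst ≠ e.snd) : f = pd hreg e :=
  (exists_unique_pred hreg e).choose_spec.2 f ⟨h1, h2⟩

lemma pd_injective (hreg : ∀ v : V, G.degree v = 2) : Function.Injective (pd hreg) := by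
  intro e e' h
  have hfst : e.fst = e'.fst := by
    rw [← pd_snd hreg e, ← pd_snd hreg e', h]
  have hmm : (pd hreg e).fst ∈ G.neighborFinset e.fst := by
    rw [G.mem_neighborFinset, ← pd_snd hreg e]
    exact (pd hreg e).adj.symm
  have hc : ((G.neighborFinset e.fst).erase (pd hreg e).fst).card ≤ 1 := by
    rw [Finset.card_erase_of_mem hmm, G.card_neighborFinset_eq_degree, hreg e.fst]
  have hm : ∀ x : G.Dart, x.fst = e.fst → pd hreg x = pd hreg e →
      x.snd ∈ (G.neighborFinset e.fst).erase (pd hreg e).fst := by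
    intro x hx hpx
    rw [Finset.mem_erase]
    constructor
    · rw [← hpx]
      exact fun hh => pd_fst_ne hreg x hh.symm
    · rw [G.mem_neighborFinset, ← hx]; exact x.adj
  have h1 := hm e rfl rfl
  have h2 := hm e' hfst.symm h.symm
  have := Finset.card_le_one.mp hc _ h1 _ h2
  exact Dart.ext _ _ (Prod.ext hfst this)

noncomputable def sig (hreg : ∀ v : V, G.degree v = 2) : Equiv.Perm G.Dart :=
  Equiv.ofBijective (pd hreg) (Finite.injective_iff_bijective.mp (pd_injective hreg))

lemma sig_apply (hreg : ∀ v : V, G.degree v = 2) (e : G.Dart) :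
    sig hreg e = pd hreg e := rfl

lemma sig_snd (hreg : ∀ v : V, G.degree v = 2) (e : G.Dart) :
    (sig hreg e).snd = e.fst := pd_snd hreg e

lemma sig_fst_ne (hreg : ∀ v : V, G.degree v = 2) (e : G.Dart) :
    (sig hreg e).fst ≠ e.snd := pd_fst_ne hreg e


noncomputable def wseq (hreg : ∀ v : V, G.degree v = 2) (e : G.Dart) (k : ℕ) : V :=
  ((sig hreg ^ k) e).snd

lemma wseq_fst (hreg : ∀ v : V, G.degree v = 2) (e : G.Dart) (k : ℕ) :
    ((sig hreg ^ k) e).fst = wseq hreg e (k + 1) := by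
  unfold wseq
  rw [pow_succ', Equiv.Perm.mul_apply, sig_snd]

lemma wseq_adj (hreg : ∀ v : V, G.degree v = 2) (e : G.Dart) (k : ℕ) :
    G.Adj (wseq hreg e (k + 1)) (wseq hreg e k) := by
  rw [← wseq_fst]
  exact ((sig hreg ^ k) e).adj

lemma wseq_ne (hreg : ∀ v : V, G.degree v = 2) (e : G.Dart) (k : ℕ) :
    wseq hreg e (k + 2) ≠ wseq hreg e k := by
  have h := sig_fst_ne hreg ((sig hreg ^ k) e)
  rw [← Equiv.Perm.mul_apply, ← pow_succ'] at h
  rw [show k + 2 = (k+1) + 1 from rfl, ← wseq_fst]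
  exact h

lemma wseq_nbhd (hreg : ∀ v : V, G.degree v = 2) (e : G.Dart) (k : ℕ) :
    G.neighborFinset (wseq hreg e (k + 1)) = {wseq hreg e (k + 2), wseq hreg e k} := by
  have hsub : {wseq hreg e (k + 2), wseq hreg e k} ⊆ G.neighborFinset (wseq hreg e (k + 1)) := by
    intro x hx
    rw [Finset.mem_insert, Finset.mem_singleton] at hx
    rw [G.mem_neighborFinset]
    rcases hx with h | h
    · subst h
      exact (wseq_adj hreg e (k+1)).symm
    · subst h
      exact wseq_adj hreg e k
  refine (Finset.eq_of_subset_of_card_le hsub ?_).symm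
  rw [Finset.card_insert_of_notMem (by simp [wseq_ne hreg e k]),
    Finset.card_singleton, G.card_neighborFinset_eq_degree, hreg]

lemma dart_eq_of (hreg : ∀ v : V, G.degree v = 2) {e : G.Dart} {i j : ℕ}
    (h1 : wseq hreg e (i+1) = wseq hreg e (j+1)) (h2 : wseq hreg e i = wseq hreg e j) :
    (sig hreg ^ i) e = (sig hreg ^ j) e := by
  apply SimpleGraph.Dart.ext
  apply Prod.ext
  · rw [wseq_fst, wseq_fst]; exact h1
  · exact h2

lemma pow_cancel (hreg : ∀ v : V, G.degree v = 2) {e : G.Dart} {i j : ℕ}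
    (hij : i ≤ j) (h : (sig hreg ^ i) e = (sig hreg ^ j) e) :
    (sig hreg ^ (j - i)) e = e := by
  apply Equiv.injective (sig hreg ^ i)
  rw [← Equiv.Perm.mul_apply, ← pow_add, show i + (j - i) = j from by omega]
  exact h.symm

lemma wseq_shift (hreg : ∀ v : V, G.degree v = 2) {e : G.Dart} {p : ℕ}
    (hp : (sig hreg ^ p) e = e) (m : ℕ) : wseq hreg e (m + p) = wseq hreg e m := by
  unfold wseq
  rw [pow_add, Equiv.Perm.mul_apply, hp]


lemma inj_w (hreg : ∀ v : V, G.degree v = 2) (e : G.Dart) :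
    ∀ j, ∀ i < j, wseq hreg e (i+1) = wseq hreg e (j+1) →
      (sig hreg ^ i) e = (sig hreg ^ j) e := by
  intro j
  induction j using Nat.strong_induction_on with
  | _ j IH =>
    intro i hij hw
    by_contra hne
    rcases show j = i + 1 ∨ j = i + 2 ∨ i + 3 ≤ j from by omega with hj | hj | hj
    · subst hj
      have h := wseq_adj hreg e (i+1)
      rw [hw] at h
      exact G.irrefl h
    · subst hj
      exact wseq_ne hreg e (i+1) hw.symm
    · have hsnd : wseq hreg e i ≠ wseq hreg e j := fun hs => hne (dart_eq_of hreg hw hs)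
      have hmem : wseq hreg e j ∈ G.neighborFinset (wseq hreg e (i+1)) := by
        rw [hw, G.mem_neighborFinset]
        exact wseq_adj hreg e j
      rw [wseq_nbhd, Finset.mem_insert, Finset.mem_singleton] at hmem
      have h2 : wseq hreg e j = wseq hreg e (i+1+1) := hmem.resolve_right hsnd.symm
      have hji : wseq hreg e ((i+1)+1) = wseq hreg e ((j-1)+1) := by
        rw [show (j-1)+1 = j from by omega]
        exact h2.symm
      have hmid := IH (j-1) (by omega) (i+1) (by omega) hji
      have hp : (sig hreg ^ (j - i - 2)) e = e := by
        have hq := pow_cancel hreg (show i+1 ≤ j-1 from by omega) hmid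
        rw [show j - 1 - (i+1) = j - i - 2 from by omega] at hq
        exact hq
      have hper : wseq hreg e (j+1) = wseq hreg e (i+3) := by
        rw [show j + 1 = (i + 3) + (j - i - 2) from by omega]
        exact wseq_shift hreg hp (i+3)
      have : wseq hreg e (i+1+2) = wseq hreg e (i+1) := by
        rw [show i+1+2 = i+3 from rfl, ← hper, ← hw]
      exact wseq_ne hreg e (i+1) this


lemma orbit_lemma (hreg : ∀ v : V, G.degree v = 2) (hconn : G.Connected) {n : ℕ}
    (hcard : Fintype.card V = n) (hn : 0 < n) (e : G.Dart) :
    (sig hreg ^ n) e = e ∧ ∀ k, 0 < k → k < n → (sig hreg ^ k) e ≠ e := by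
  have hex : ∃ k, 0 < k ∧ (sig hreg ^ k) e = e := by
    obtain ⟨i, hi, j, hj, hne, hww⟩ := Finset.exists_ne_map_eq_of_card_lt_of_maps_to
      (s := Finset.range (n+1)) (t := (Finset.univ : Finset V))
      (by simp [hcard]) (fun a _ => Finset.mem_univ (wseq hreg e (a+1)))
    rcases Nat.lt_or_ge i j with h | h
    · exact ⟨j - i, by omega, pow_cancel hreg (le_of_lt h) (inj_w hreg e j i h hww)⟩
    · have hlt : j < i := by omega
      exact ⟨i - j, by omega, pow_cancel hreg (le_of_lt hlt) (inj_w hreg e i j hlt hww.symm)⟩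
  set L := Nat.find hex with hLdef
  obtain ⟨hL0, hLe⟩ := Nat.find_spec hex
  have hdist : ∀ i j, i < j → j < L → wseq hreg e (i+1) ≠ wseq hreg e (j+1) := by
    intro i j hij hjL hww
    have hc := pow_cancel hreg (le_of_lt hij) (inj_w hreg e j i hij hww)
    exact Nat.find_min hex (show j - i < L from by omega) ⟨by omega, hc⟩
  set W := (Finset.range L).image (fun k => wseq hreg e (k+1)) with hW
  have hinj : Set.InjOn (fun k => wseq hreg e (k+1)) ↑(Finset.range L) := by
    intro i hi j hj hww
    simp only [Finset.coe_range, Set.mem_Iio] at hi hj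
    rcases lt_trichotomy i j with h|h|h
    · exact absurd hww (hdist i j h hj)
    · exact h
    · exact absurd hww.symm (hdist j i h hi)
  have hcardW : W.card = L := by
    rw [hW, Finset.card_image_of_injOn hinj, Finset.card_range]
  have hclosed : ∀ u ∈ W, ∀ x, G.Adj u x → x ∈ W := by
    intro u hu x hadj
    rw [hW, Finset.mem_image] at hu
    obtain ⟨k, hk, rfl⟩ := hu
    rw [Finset.mem_range] at hk
    have hx : x ∈ G.neighborFinset (wseq hreg e (k+1)) := (G.mem_neighborFinset _ _).2 hadj
    rw [wseq_nbhd, Finset.mem_insert, Finset.mem_singleton] at hx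
    rcases hx with h | h
    · subst h
      rcases Nat.lt_or_ge (k+1) L with hkL | hkL
      · exact Finset.mem_image.2 ⟨k+1, Finset.mem_range.2 hkL, rfl⟩
      · have heq : wseq hreg e (k+2) = wseq hreg e (0+1) := by
          rw [show k+2 = (0+1) + L from by omega]
          exact wseq_shift hreg hLe (0+1)
        rw [heq]
        exact Finset.mem_image.2 ⟨0, Finset.mem_range.2 hL0, rfl⟩
    · subst h
      rcases Nat.eq_zero_or_pos k with rfl | hk0
      · have heq : wseq hreg e 0 = wseq hreg e ((L-1)+1) := by
          rw [show (L-1)+1 = L from by omega, show L = 0 + L from by omega]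
          exact (wseq_shift hreg hLe 0).symm
        rw [heq]
        exact Finset.mem_image.2 ⟨L-1, Finset.mem_range.2 (by omega), rfl⟩
      · exact Finset.mem_image.2 ⟨k-1, Finset.mem_range.2 (by omega),
          by rw [show k-1+1 = k from by omega]⟩
  have hwalk : ∀ (a b : V) (p : G.Walk a b), a ∈ W → b ∈ W := by
    intro a b p
    induction p with
    | nil => exact id
    | cons h q ih => exact fun ha => ih (hclosed _ ha _ h)
  have huniv : W = Finset.univ := by
    apply Finset.eq_univ_iff_forall.2
    intro u
    obtain ⟨p⟩ := hconn.preconnected (wseq hreg e (0+1)) u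
    exact hwalk _ _ p (Finset.mem_image.2 ⟨0, Finset.mem_range.2 hL0, rfl⟩)
  have hLn : L = n := by
    rw [huniv] at hcardW
    rw [← hcardW, Finset.card_univ, hcard]
  constructor
  · rw [← hLn]; exact hLe
  · intro k hk0 hkn hke
    exact Nat.find_min hex (show k < L from by omega) ⟨hk0, hke⟩


lemma nbMatrix'_eq (hreg : ∀ v : V, G.degree v = 2) (a b : G.Dart) :
    nbMatrix' G a b = if b = sig hreg a then 1 else 0 := by
  have hiff : (b.snd = a.fst ∧ b.fst ≠ a.snd) ↔ b = sig hreg a :=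
    ⟨fun ⟨h1, h2⟩ => pd_eq hreg h1 h2, fun h => h ▸ ⟨pd_snd hreg a, pd_fst_ne hreg a⟩⟩
  simp only [nbMatrix', hiff]

lemma sig_symm (hreg : ∀ v : V, G.degree v = 2) (f : G.Dart) :
    sig hreg ((sig hreg f).symm) = f.symm := by
  refine (pd_eq hreg ?_ ?_).symm
  · show f.symm.snd = ((sig hreg f).symm).fst
    have h1 : f.symm.snd = f.fst := rfl
    have h2 : ((sig hreg f).symm).fst = (sig hreg f).snd := rfl
    rw [h1, h2, sig_snd]
  · show f.symm.fst ≠ ((sig hreg f).symm).snd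
    have h1 : f.symm.fst = f.snd := rfl
    have h2 : ((sig hreg f).symm).snd = (sig hreg f).fst := rfl
    rw [h1, h2]
    exact fun hh => sig_fst_ne hreg f hh.symm

lemma rev_not_orbit (hreg : ∀ v : V, G.degree v = 2) (hconn : G.Connected) {n : ℕ}
    (hcard : Fintype.card V = n) (hn : 0 < n) (e : G.Dart) {k : ℕ} (hk : k < n) :
    (sig hreg ^ k) e ≠ e.symm := by
  intro hke
  rcases Nat.eq_zero_or_pos k with rfl | hk0
  · exact SimpleGraph.Dart.symm_ne e hke.symm
  have hkey : sig hreg ((sig hreg e).symm) = (sig hreg ^ k) e := by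
    rw [hke]
    exact (sig_symm hreg e)
  have hstep : (sig hreg ^ k) e = sig hreg ((sig hreg ^ (k-1)) e) := by
    rw [← Equiv.Perm.mul_apply, ← pow_succ', show k - 1 + 1 = k from by omega]
  have hrev : (sig hreg e).symm = (sig hreg ^ (k-1)) e := by
    apply Equiv.injective (sig hreg)
    rw [hkey, hstep]
  -- fst of both sides
  have hfst : wseq hreg e ((k-1)+1) = wseq hreg e (0+1) := by
    rw [← wseq_fst, ← wseq_fst, ← hrev]
    show ((sig hreg e).symm).fst = (e : G.Dart).fst
    have h2 : ((sig hreg e).symm).fst = (sig hreg e).snd := rfl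
    rw [h2, sig_snd]
  -- distinctness of wseq below n
  have hdist : k - 1 = 0 := by
    by_contra hne
    have h01 : (0:ℕ) < k - 1 := by omega
    have hc := pow_cancel hreg (Nat.zero_le _)
      (inj_w hreg e (k-1) 0 h01 hfst.symm)
    rw [Nat.sub_zero] at hc
    exact (orbit_lemma hreg hconn hcard hn e).2 (k-1) h01 (by omega) hc
  rw [hdist] at hrev
  have : ((sig hreg e).symm).snd = e.snd := by rw [hrev]; rfl
  exact sig_fst_ne hreg e this

lemma cross_orbit (hreg : ∀ v : V, G.degree v = 2) (hconn : G.Connected) {n : ℕ}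
    (hcard : Fintype.card V = n) (hn : 0 < n) (e : G.Dart) {a b : ℕ}
    (ha : a < n) (hb : b < n) : (sig hreg ^ a) e ≠ (sig hreg ^ b) e.symm := by
  intro hab
  have hne : (sig hreg ^ ((a + (n - b)) % n)) e = e.symm := by
    have h1 : (sig hreg ^ b) ((sig hreg ^ (a + (n - b))) e) = (sig hreg ^ b) (e.symm) := by
      rw [← Equiv.Perm.mul_apply, ← pow_add, show b + (a + (n - b)) = a + n from by omega,
        pow_add, Equiv.Perm.mul_apply, (orbit_lemma hreg hconn hcard hn e).1, hab]
    have h2 := Equiv.injective (sig hreg ^ b) h1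
    rw [← h2]
    rcases Nat.lt_or_ge (a + (n - b)) n with h | h
    · rw [Nat.mod_eq_of_lt h]
    · rw [Nat.mod_eq_sub_mod h, Nat.mod_eq_of_lt (by omega)]
      conv_rhs => rw [show a + (n - b) = (a + (n - b) - n) + n from by omega, pow_add,
        Equiv.Perm.mul_apply, (orbit_lemma hreg hconn hcard hn e).1]
  exact rev_not_orbit hreg hconn hcard hn e (Nat.mod_lt _ hn) hne

end NBHelper

namespace NBShift

noncomputable def shiftMat (n : ℕ) [NeZero n] : Matrix (Fin n) (Fin n) ℂ :=
  Matrix.of fun k j => if j = k + 1 then 1 else 0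

lemma pow_mod {μ : ℂ} {n : ℕ} (h : μ ^ n = 1) (a : ℕ) : μ ^ (a % n) = μ ^ a := by
  conv_rhs => rw [← Nat.div_add_mod a n, pow_add, pow_mul, h, one_pow]
  rw [one_mul]

lemma pow_modeq {μ : ℂ} {n : ℕ} (h : μ ^ n = 1) {a b : ℕ} (hab : a % n = b % n) :
    μ ^ a = μ ^ b := by
  rw [← pow_mod h a, hab, pow_mod h b]

lemma shift_mulVec {n : ℕ} [NeZero n] (v : Fin n → ℂ) (k : Fin n) :
    (shiftMat n).mulVec v k = v (k + 1) := by
  simp [shiftMat, Matrix.mulVec, dotProduct, ite_mul, one_mul, zero_mul]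

lemma charpoly_shift (n : ℕ) [NeZero n] : (shiftMat n).charpoly = X ^ n - 1 := by
  have hn : 0 < n := Nat.pos_of_ne_zero (NeZero.ne n)
  set p := (shiftMat n).charpoly with hp
  have hmonic : p.Monic := Matrix.charpoly_monic _
  have hp0 : p ≠ 0 := hmonic.ne_zero
  have hdeg : p.natDegree = n := by
    rw [hp, Matrix.charpoly_natDegree_eq_dim, Fintype.card_fin]
  have hroot : ∀ μ : ℂ, μ ^ n = 1 → p.IsRoot μ := by
    intro μ hμ
    have heval : p.eval μ = ((μ • (1 : Matrix (Fin n) (Fin n) ℂ)) - shiftMat n).det := by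
      rw [hp, Matrix.charpoly, ← Polynomial.coe_evalRingHom, RingHom.map_det]
      congr 1
      ext i j
      by_cases h : i = j <;>
        simp [h, Matrix.charmatrix_apply_eq, Matrix.charmatrix_apply_ne, Matrix.smul_apply,
          Matrix.one_apply, Matrix.sub_apply]
    have hker : ∃ v ≠ 0, ((μ • (1 : Matrix (Fin n) (Fin n) ℂ)) - shiftMat n).mulVec v = 0 := by
      refine ⟨fun k => μ ^ (k : ℕ), ?_, ?_⟩
      · intro h
        have h0 := congrFun h ⟨0, hn⟩
        simp at h0
      · funext k
        rw [Matrix.sub_mulVec, Matrix.smul_mulVec, Matrix.one_mulVec]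
        have hv : (shiftMat n).mulVec (fun k => μ ^ (k : ℕ)) k = μ ^ ((k : ℕ) + 1) := by
          rw [shift_mulVec]
          apply pow_modeq hμ
          rw [Fin.add_def]
          simp only [Fin.val_one']
          have h1 : ((k:ℕ) + 1 % n) % n % n = ((k:ℕ) + 1 % n) % n :=
            Nat.mod_mod_of_dvd _ dvd_rfl
          have h2 : ((k:ℕ) + 1 % n) % n = ((k:ℕ) + 1) % n :=
            Nat.ModEq.add_left _ (Nat.mod_modEq 1 n)
          rw [h1, h2]
        simp only [Pi.sub_apply, Pi.smul_apply, Pi.zero_apply, smul_eq_mul]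
        rw [hv, pow_succ]
        ring
    rw [IsRoot, heval]
    rw [← Matrix.exists_mulVec_eq_zero_iff]
    exact hker
  have hζ := Complex.isPrimitiveRoot_exp n (NeZero.ne n)
  have hqprod : (X ^ n - 1 : ℂ[X]) = ∏ z ∈ Polynomial.nthRootsFinset n (1 : ℂ), (X - C z) :=
    X_pow_sub_one_eq_prod hn hζ
  have hq0 : (X ^ n - 1 : ℂ[X]) ≠ 0 := by
    intro h
    have := Polynomial.natDegree_X_pow_sub_C (n := n) (r := (1:ℂ))
    rw [← Polynomial.C_1] at h
    rw [h] at this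
    simp at this
    omega
  have hqmonic : (X ^ n - 1 : ℂ[X]).Monic := by
    rw [← Polynomial.C_1]
    exact Polynomial.monic_X_pow_sub_C _ (NeZero.ne n)
  have hqdeg : (X ^ n - 1 : ℂ[X]).natDegree = n := by
    rw [← Polynomial.C_1]
    exact Polynomial.natDegree_X_pow_sub_C
  have hple : (Polynomial.nthRootsFinset n (1 : ℂ)).val ≤ p.roots := by
    rw [Multiset.le_iff_count]
    intro a
    by_cases ha : a ∈ Polynomial.nthRootsFinset n (1 : ℂ)
    · have h1 : (Polynomial.nthRootsFinset n (1 : ℂ)).val.count a = 1 :=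
        Multiset.count_eq_one_of_mem (Polynomial.nthRootsFinset n (1 : ℂ)).nodup ha
      rw [h1]
      rw [Multiset.one_le_count_iff_mem]
      rw [Polynomial.mem_roots hp0]
      exact hroot a ((Polynomial.mem_nthRootsFinset hn (1 : ℂ)).1 ha)
    · rw [Multiset.count_eq_zero_of_notMem (by simpa using ha)]
      exact Nat.zero_le _
  have hdvd : (X ^ n - 1 : ℂ[X]) ∣ p := by
    have h1 : (X ^ n - 1 : ℂ[X]) ∣ (p.roots.map (fun a => X - C a)).prod := by
      rw [hqprod, Finset.prod_eq_multiset_prod]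
      exact Multiset.prod_dvd_prod_of_le (Multiset.map_le_map hple)
    exact h1.trans (Polynomial.prod_multiset_X_sub_C_dvd p)
  obtain ⟨c, hc⟩ := hdvd
  have hc0 : c ≠ 0 := by
    intro h
    rw [h, mul_zero] at hc
    exact hp0 hc
  have hcdeg : c.natDegree = 0 := by
    have := hdeg
    rw [hc, Polynomial.natDegree_mul hq0 hc0, hqdeg] at this
    omega
  have hcmonic : c.Monic := by
    have := hmonic
    rw [hc] at this
    exact hqmonic.of_mul_monic_left this
  have : c = 1 := hcmonic.natDegree_eq_zero.1 hcdeg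
  rw [hc, this, mul_one]


noncomputable def vmat (n : ℕ) (ω : ℂ) : Matrix (Fin n) (Fin n) ℂ :=
  Matrix.of fun k j => ω ^ ((k : ℕ) * (j : ℕ))

noncomputable def dgv (n : ℕ) (ω : ℂ) : Fin n → ℂ := fun j => ω ^ (j : ℕ)

lemma shift_mul_vand {n : ℕ} [NeZero n] {ω : ℂ} (hω : ω ^ n = 1) :
    shiftMat n * vmat n ω = vmat n ω * Matrix.diagonal (dgv n ω) := by
  ext k j
  have hl : (shiftMat n * vmat n ω) k j = vmat n ω (k+1) j := by
    simp [shiftMat, vmat, Matrix.mul_apply, ite_mul, one_mul, zero_mul]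
  rw [hl, Matrix.mul_diagonal]
  show ω ^ (((k+1 : Fin n) : ℕ) * (j : ℕ)) = ω ^ ((k : ℕ) * (j : ℕ)) * ω ^ (j : ℕ)
  rw [← pow_add]
  apply pow_modeq hω
  have h1 : ((k+1 : Fin n) : ℕ) % n = ((k : ℕ) + 1) % n := by
    rw [Fin.add_def]
    simp only [Fin.val_one']
    have h1' : ((k:ℕ) + 1 % n) % n % n = ((k:ℕ) + 1 % n) % n := Nat.mod_mod_of_dvd _ dvd_rfl
    have h2' : ((k:ℕ) + 1 % n) % n = ((k:ℕ) + 1) % n :=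
      Nat.ModEq.add_left _ (Nat.mod_modEq 1 n)
    rw [h1', h2']
  have h2 : (((k+1 : Fin n) : ℕ)) * (j : ℕ) ≡ ((k : ℕ) + 1) * (j : ℕ) [MOD n] :=
    Nat.ModEq.mul_right _ h1
  have h3 : ((k : ℕ) + 1) * (j : ℕ) = (k : ℕ) * (j : ℕ) + (j : ℕ) := by ring
  rw [← h3]
  exact h2

lemma det_vmat_ne {n : ℕ} {ω : ℂ} (hω : IsPrimitiveRoot ω n) : (vmat n ω).det ≠ 0 := by
  have hv : vmat n ω = Matrix.vandermonde (fun k : Fin n => ω ^ (k : ℕ)) := by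
    ext k j
    show ω ^ ((k : ℕ) * (j : ℕ)) = (ω ^ (k:ℕ)) ^ (j:ℕ)
    rw [← pow_mul]
  rw [hv, Ne, Matrix.det_vandermonde_eq_zero_iff]
  push_neg
  intro i j hij
  exact Fin.ext (hω.pow_inj i.isLt j.isLt hij)

end NBShift


/-- For the cycle graph on `n ≥ 3` vertices (the connected 2-regular graph),
the characteristic polynomial of `B` is `(X^n − 1)²`, every `n`-th root of unity has
eigenspace of dimension `2`, and `B` is diagonalizable over `ℂ`. -/
theorem nbMatrix_cycleGraph_charpoly_eigenspaces_diagonalizable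
    [DecidableEq V] [Fintype V] (G : SimpleGraph V) [DecidableRel G.Adj]
    (n : ℕ) (hn : 3 ≤ n) (hcard : Fintype.card V = n)
    (hconn : G.Connected) (hreg : ∀ v : V, G.degree v = 2) :
    (nbMatrix G).charpoly = (X ^ n - 1) ^ 2 ∧
    (∀ μ : ℂ, μ ^ n = 1 →
      Module.finrank ℂ ↥(LinearMap.ker (nbMatrix G - μ • 1).mulVecLin) = 2) ∧
    ∃ U D : Matrix G.Dart G.Dart ℂ, IsUnit U ∧ D.IsDiag ∧ nbMatrix G = U * D * U⁻¹ := by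
  classical
  haveI : NeZero n := ⟨by omega⟩
  have hn0 : 0 < n := by omega
  have hnb : nbMatrix G = nbMatrix' G := rfl
  -- pick a starting dart
  have hV : Nonempty V := by
    rw [← Fintype.card_pos_iff, hcard]; omega
  obtain ⟨v0⟩ := hV
  obtain ⟨u0, hu0⟩ := (G.degree_pos_iff_exists_adj v0).1 (by rw [hreg]; omega)
  set e0 : G.Dart := ⟨(v0, u0), hu0⟩ with he0
  set σ := NBHelper.sig hreg with hσdef
  have horb := fun (e : G.Dart) => NBHelper.orbit_lemma hreg hconn hcard hn0 e
  have hinj_orbit : ∀ (e : G.Dart) (i j : ℕ), i < n → j < n →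
      (σ ^ i) e = (σ ^ j) e → i = j := by
    intro e i j hi hj h
    rcases lt_trichotomy i j with hlt | heq | hlt
    · exact absurd (NBHelper.pow_cancel hreg hlt.le h) ((horb e).2 (j-i) (by omega) (by omega))
    · exact heq
    · exact absurd (NBHelper.pow_cancel hreg hlt.le h.symm)
        ((horb e).2 (i-j) (by omega) (by omega))
  -- the indexing bijection
  set ψfun : Fin n ⊕ Fin n → G.Dart :=
    Sum.elim (fun k => (σ ^ (k : ℕ)) e0) (fun k => (σ ^ (k : ℕ)) e0.symm) with hψfun
  have hψinj : Function.Injective ψfun := by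
    rintro (a | a) (b | b) h <;> simp only [hψfun, Sum.elim_inl, Sum.elim_inr] at h
    · exact congrArg Sum.inl (Fin.ext (hinj_orbit e0 _ _ a.isLt b.isLt h))
    · exact absurd h (NBHelper.cross_orbit hreg hconn hcard hn0 e0 a.isLt b.isLt)
    · exact absurd h.symm (NBHelper.cross_orbit hreg hconn hcard hn0 e0 b.isLt a.isLt)
    · exact congrArg Sum.inr (Fin.ext (hinj_orbit e0.symm _ _ a.isLt b.isLt h))
  have hcardD : Fintype.card G.Dart = 2 * n := by
    rw [SimpleGraph.dart_card_eq_sum_degrees]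
    simp [hreg, hcard, Finset.sum_const, Finset.card_univ, mul_comm]
  have hψbij : Function.Bijective ψfun :=
    (Fintype.bijective_iff_injective_and_card _).2 ⟨hψinj, by simp [hcardD]; omega⟩
  set ψ : (Fin n ⊕ Fin n) ≃ G.Dart := Equiv.ofBijective ψfun hψbij with hψdef
  have hψl : ∀ k : Fin n, ψ (Sum.inl k) = (σ ^ (k : ℕ)) e0 := fun k => rfl
  have hψr : ∀ k : Fin n, ψ (Sum.inr k) = (σ ^ (k : ℕ)) e0.symm := fun k => rfl
  -- power mod facts
  have hfix : ∀ (f : G.Dart) (q : ℕ), ((σ ^ n) ^ q) f = f := by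
    intro f q
    induction q with
    | zero => rfl
    | succ q ih =>
      rw [pow_succ, Equiv.Perm.mul_apply, (horb f).1]
      exact ih
  have hpowmod : ∀ (f : G.Dart) (a : ℕ), (σ ^ a) f = (σ ^ (a % n)) f := by
    intro f a
    conv_lhs => rw [← Nat.div_add_mod a n, pow_add, pow_mul, Equiv.Perm.mul_apply]
    rw [hfix]
  have hvk : ∀ k : Fin n, ((k + 1 : Fin n) : ℕ) = ((k : ℕ) + 1) % n := by
    intro k
    rw [Fin.add_def]
    simp only [Fin.val_one']
    have h1' : ((k:ℕ) + 1 % n) % n % n = ((k:ℕ) + 1 % n) % n := Nat.mod_mod_of_dvd _ dvd_rfl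
    have h2' : ((k:ℕ) + 1 % n) % n = ((k:ℕ) + 1) % n :=
      Nat.ModEq.add_left _ (Nat.mod_modEq 1 n)
    conv_lhs => rw [← h1']
    rw [h1', h2']
  have hstep : ∀ (f : G.Dart) (k : Fin n), σ ((σ ^ (k : ℕ)) f) = (σ ^ (((k+1 : Fin n)) : ℕ)) f := by
    intro f k
    rw [← Equiv.Perm.mul_apply, ← pow_succ', hvk k, ← hpowmod]
  -- the block structure
  set S := NBShift.shiftMat n with hSdef
  have hM' : (nbMatrix G).submatrix ψ ψ = Matrix.fromBlocks S 0 0 S := by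
    ext p q
    rw [Matrix.submatrix_apply, hnb, NBHelper.nbMatrix'_eq hreg]
    rcases p with k | k <;> rcases q with j | j
    · rw [hψl, hψl, ← hσdef, hstep e0 k]
      show _ = S k j
      rw [hSdef]
      show _ = if j = k + 1 then (1:ℂ) else 0
      by_cases hj : j = k + 1
      · subst hj
        rw [if_pos rfl, if_pos rfl]
      · rw [if_neg hj, if_neg (fun hh => hj (Fin.ext (hinj_orbit e0 _ _ j.isLt (k+1).isLt hh)))]
    · rw [hψl, hψr, ← hσdef, hstep e0 k]
      show _ = (0 : Matrix (Fin n) (Fin n) ℂ) k j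
      rw [if_neg, Matrix.zero_apply]
      exact fun hh =>
        NBHelper.cross_orbit hreg hconn hcard hn0 e0 (k+1).isLt j.isLt hh.symm
    · rw [hψr, hψl, ← hσdef, hstep e0.symm k]
      show _ = (0 : Matrix (Fin n) (Fin n) ℂ) k j
      rw [if_neg, Matrix.zero_apply]
      exact fun hh =>
        NBHelper.cross_orbit hreg hconn hcard hn0 e0 j.isLt (k+1).isLt hh
    · rw [hψr, hψr, ← hσdef, hstep e0.symm k]
      show _ = S k j
      rw [hSdef]
      show _ = if j = k + 1 then (1:ℂ) else 0
      by_cases hj : j = k + 1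
      · subst hj
        rw [if_pos rfl, if_pos rfl]
      · rw [if_neg hj,
          if_neg (fun hh => hj (Fin.ext (hinj_orbit e0.symm _ _ j.isLt (k+1).isLt hh)))]
  -- Part 1 : the characteristic polynomial
  have hchar : (nbMatrix G).charpoly = (X ^ n - 1) ^ 2 := by
    have h1 : ((nbMatrix G).submatrix ψ ψ).charpoly = (nbMatrix G).charpoly := by
      rw [show (nbMatrix G).submatrix ψ ψ = (Matrix.reindex ψ.symm ψ.symm) (nbMatrix G) by
        rw [Matrix.reindex_apply, Equiv.symm_symm]]
      exact Matrix.charpoly_reindex ψ.symm (nbMatrix G)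
    rw [← h1, hM', Matrix.charpoly_fromBlocks_zero₂₁, hSdef, NBShift.charpoly_shift, sq]
  -- the eigendecomposition
  set ω : ℂ := Complex.exp (2 * Real.pi * Complex.I / n) with hωdef
  have hω : IsPrimitiveRoot ω n := Complex.isPrimitiveRoot_exp n (NeZero.ne n)
  set F := NBShift.vmat n ω with hFdef
  set dg := NBShift.dgv n ω with hdgdef
  have hSF : S * F = F * Matrix.diagonal dg := NBShift.shift_mul_vand hω.pow_eq_one
  have hdetF : F.det ≠ 0 := NBShift.det_vmat_ne hω
  set U0 : Matrix (Fin n ⊕ Fin n) (Fin n ⊕ Fin n) ℂ := Matrix.fromBlocks F 0 0 F with hU0def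
  set d : (Fin n ⊕ Fin n) → ℂ := Sum.elim dg dg with hddef
  have hD0 : (Matrix.diagonal d : Matrix (Fin n ⊕ Fin n) _ ℂ) =
      Matrix.fromBlocks (Matrix.diagonal dg) 0 0 (Matrix.diagonal dg) := by
    rw [hddef, ← Matrix.fromBlocks_diagonal]
  have hU0det : IsUnit U0.det := by
    rw [hU0def, Matrix.det_fromBlocks_zero₂₁]
    exact isUnit_iff_ne_zero.2 (mul_ne_zero hdetF hdetF)
  have hMU0 : (nbMatrix G).submatrix ψ ψ * U0 = U0 * Matrix.diagonal d := by
    rw [hM', hU0def, hD0, Matrix.fromBlocks_multiply, Matrix.fromBlocks_multiply]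
    simp only [Matrix.mul_zero, Matrix.zero_mul, add_zero, zero_add, hSF]
  set U : Matrix G.Dart G.Dart ℂ := U0.submatrix ψ.symm ψ.symm with hUdef
  set D : Matrix G.Dart G.Dart ℂ := (Matrix.diagonal d).submatrix ψ.symm ψ.symm with hDdef
  have hMsub : ((nbMatrix G).submatrix ψ ψ).submatrix ψ.symm ψ.symm = nbMatrix G := by
    rw [Matrix.submatrix_submatrix]
    simp [Equiv.self_comp_symm]
  have hMU : nbMatrix G * U = U * D := by
    calc nbMatrix G * U
        = ((nbMatrix G).submatrix ψ ψ).submatrix ψ.symm ψ.symm * U0.submatrix ψ.symm ψ.symm := by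
          rw [hMsub]
      _ = (((nbMatrix G).submatrix ψ ψ) * U0).submatrix ψ.symm ψ.symm :=
          Matrix.submatrix_mul_equiv _ _ _ _ _
      _ = (U0 * Matrix.diagonal d).submatrix ψ.symm ψ.symm := by rw [hMU0]
      _ = U * D := (Matrix.submatrix_mul_equiv _ _ _ _ _).symm
  have hUdet : IsUnit U.det := by
    rw [hUdef, Matrix.det_submatrix_equiv_self]
    exact hU0det
  have hUD : nbMatrix G = U * D * U⁻¹ := by
    calc nbMatrix G = nbMatrix G * (U * U⁻¹) := by rw [Matrix.mul_nonsing_inv U hUdet, mul_one]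
      _ = (nbMatrix G * U) * U⁻¹ := by rw [mul_assoc]
      _ = U * D * U⁻¹ := by rw [hMU]
  have hDdiag : D.IsDiag := by
    intro i j hij
    rw [hDdef, Matrix.submatrix_apply]
    exact Matrix.diagonal_apply_ne _ (fun hh => hij (by
      have := congrArg ψ hh
      simpa using this))
  refine ⟨hchar, ?_, U, D, (Matrix.isUnit_iff_isUnit_det U).2 hUdet, hDdiag, hUD⟩
  -- Part 2 : eigenspace dimensions
  intro μ hμ
  obtain ⟨j0, hj0lt, hj0⟩ := hω.eq_pow_of_pow_eq_one hμ
  set jF : Fin n := ⟨j0, hj0lt⟩ with hjFdef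
  have hMμ : nbMatrix G - μ • 1 = U * (D - μ • 1) * U⁻¹ := by
    rw [Matrix.mul_sub, Matrix.sub_mul, hUD, Matrix.mul_smul, Matrix.smul_mul, mul_one,
      Matrix.mul_nonsing_inv U hUdet]
  have hrank1 : (nbMatrix G - μ • 1).rank = (D - μ • 1).rank := by
    rw [hMμ, Matrix.rank_mul_eq_left_of_isUnit_det U⁻¹ _ (Matrix.isUnit_nonsing_inv_det U hUdet),
      Matrix.rank_mul_eq_right_of_isUnit_det U _ hUdet]
  have hDsub : D - μ • 1 = (Matrix.diagonal (fun i => d i - μ)).submatrix ψ.symm ψ.symm := by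
    rw [hDdef, ← Matrix.submatrix_one_equiv ψ.symm]
    ext i j
    simp only [Matrix.sub_apply, Matrix.smul_apply, Matrix.submatrix_apply, smul_eq_mul]
    by_cases hh : ψ.symm i = ψ.symm j
    · rw [hh, Matrix.diagonal_apply_eq, Matrix.diagonal_apply_eq, Matrix.one_apply_eq]
      ring
    · rw [Matrix.diagonal_apply_ne _ hh, Matrix.diagonal_apply_ne _ hh,
        Matrix.one_apply_ne hh]
      ring
  have hrank2 : (D - μ • 1).rank = Fintype.card {i : Fin n ⊕ Fin n // d i - μ ≠ 0} := by
    rw [hDsub, Matrix.rank_submatrix, Matrix.rank_diagonal]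
  have hzero : ∀ i : Fin n ⊕ Fin n, d i - μ = 0 ↔ (i = Sum.inl jF ∨ i = Sum.inr jF) := by
    have hdg : ∀ k : Fin n, dg k = μ ↔ k = jF := by
      intro k
      constructor
      · intro hk
        apply Fin.ext
        apply hω.pow_inj k.isLt hj0lt
        rw [hj0]
        exact hk
      · rintro rfl
        exact hj0
    rintro (i | i) <;>
      simp only [hddef, Sum.elim_inl, Sum.elim_inr, sub_eq_zero, Sum.inl.injEq,
        Sum.inr.injEq, reduceCtorEq, or_false, false_or] <;> exact hdg i
  have hcount : Fintype.card {i : Fin n ⊕ Fin n // d i - μ ≠ 0} = 2 * n - 2 := by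
    rw [Fintype.card_subtype]
    have hfil : Finset.filter (fun i => d i - μ ≠ 0) Finset.univ =
        (({Sum.inl jF, Sum.inr jF} : Finset (Fin n ⊕ Fin n)))ᶜ := by
      ext i
      simp [hzero i, not_or]
    rw [hfil, Finset.card_compl, Finset.card_insert_of_notMem (by simp),
      Finset.card_singleton, Fintype.card_sum, Fintype.card_fin]
    omega
  -- rank-nullity
  have hfin := LinearMap.finrank_range_add_finrank_ker (nbMatrix G - μ • 1).mulVecLin
  rw [Module.finrank_fintype_fun_eq_card, hcardD] at hfin
  have hrr : (nbMatrix G - μ • 1).rank =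
      Module.finrank ℂ (LinearMap.range (nbMatrix G - μ • 1).mulVecLin) := rfl
  rw [← hrr, hrank1, hrank2, hcount] at hfin
  omega
end

section
/- Suppose every vertex of G has degree at least 2 and m > n. Then for every λ ∈ ℂ with |λ| = 1, the algebraic multiplicity of λ (its multiplicity as a root of the characteristic polynomial of B) equals its geometric multiplicity dim ker(B − λI); equivalently, ker((B − λI)²) = ker(B − λI), so no eigenvalue of modulus 1 is defective. -/
set_option linter.unusedSectionVars false
set_option linter.unreachableTactic false
set_option linter.unusedTactic false
set_option linter.unusedVariables false
set_option maxHeartbeats 1000000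

open Matrix Polynomial BigOperators

variable {V : Type*}

section NBAuxSection
open Finset

namespace NBAux
variable {V : Type*} [DecidableEq V] [Fintype V] {G : SimpleGraph V} [DecidableRel G.Adj]

lemma sum_symm (f : G.Dart → ℂ) : ∑ e : G.Dart, f e.symm = ∑ e : G.Dart, f e :=
  Fintype.sum_bijective _ SimpleGraph.Dart.symm_involutive.bijective _ _ (fun _ => rfl)

lemma sum_fiber_symm (z : G.Dart → ℂ) (v : V) :
    ∑ e ∈ univ.filter (fun e : G.Dart => e.snd = v), z e.symm
      = ∑ e ∈ univ.filter (fun e : G.Dart => e.fst = v), z e := by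
  refine Finset.sum_nbij' (fun e => e.symm) (fun e => e.symm) ?_ ?_ ?_ ?_ ?_ <;>
    simp [SimpleGraph.Dart.symm]

lemma sum_fiber_symm' (z : G.Dart → ℂ) (v : V) :
    ∑ e ∈ univ.filter (fun e : G.Dart => e.fst = v), z e.symm
      = ∑ e ∈ univ.filter (fun e : G.Dart => e.snd = v), z e := by
  rw [← sum_fiber_symm (fun e => z e.symm) v]; simp

lemma card_fst_fiber (v : V) :
    (univ.filter (fun e : G.Dart => e.fst = v)).card = G.degree v :=
  SimpleGraph.dart_fst_fiber_card_eq_degree G v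

lemma card_snd_fiber (v : V) :
    (univ.filter (fun e : G.Dart => e.snd = v)).card = G.degree v := by
  have h := sum_fiber_symm (G := G) (fun _ => (1 : ℂ)) v
  simp only [Finset.sum_const, nsmul_eq_mul, mul_one] at h
  have h2 : (univ.filter (fun e : G.Dart => e.snd = v)).card
      = (univ.filter (fun e : G.Dart => e.fst = v)).card := by exact_mod_cast h
  rw [h2, card_fst_fiber]

lemma sum_group_snd (F : G.Dart → ℂ) :
    ∑ e : G.Dart, F e = ∑ v : V, ∑ e ∈ univ.filter (fun e : G.Dart => e.snd = v), F e :=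
  (Finset.sum_fiberwise univ (fun e : G.Dart => e.snd) F).symm

lemma sum_group_fst (F : G.Dart → ℂ) :
    ∑ e : G.Dart, F e = ∑ v : V, ∑ e ∈ univ.filter (fun e : G.Dart => e.fst = v), F e :=
  (Finset.sum_fiberwise univ (fun e : G.Dart => e.fst) F).symm

lemma sum_fiber_const_snd (g : V → ℂ) (v : V) :
    ∑ e ∈ univ.filter (fun e : G.Dart => e.snd = v), g e.snd = (G.degree v : ℂ) * g v := by
  rw [Finset.sum_congr rfl (fun e he => by rw [(Finset.mem_filter.mp he).2]),
    Finset.sum_const, card_snd_fiber, nsmul_eq_mul]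

lemma sum_fiber_const_fst (g : V → ℂ) (v : V) :
    ∑ e ∈ univ.filter (fun e : G.Dart => e.fst = v), g e.fst = (G.degree v : ℂ) * g v := by
  rw [Finset.sum_congr rfl (fun e he => by rw [(Finset.mem_filter.mp he).2]),
    Finset.sum_const, card_fst_fiber, nsmul_eq_mul]

lemma dart_eq_symm {e f : G.Dart} (h1 : f.snd = e.fst) (h2 : f.fst = e.snd) : f = e.symm := by
  apply SimpleGraph.Dart.ext; exact Prod.ext h2 h1

lemma filter_eq_erase (e : G.Dart) :
    univ.filter (fun f : G.Dart => f.snd = e.fst ∧ f.fst ≠ e.snd)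
      = (univ.filter (fun f : G.Dart => f.snd = e.fst)).erase e.symm := by
  ext f
  simp only [Finset.mem_erase, Finset.mem_filter, Finset.mem_univ, true_and]
  constructor
  · rintro ⟨h1, h2⟩
    exact ⟨fun hf => h2 (by rw [hf]; rfl), h1⟩
  · rintro ⟨hne, h1⟩
    exact ⟨h1, fun h2 => hne (dart_eq_symm h1 h2)⟩

lemma mulVec_nbMatrix (z : G.Dart → ℂ) (e : G.Dart) :
    (nbMatrix G).mulVec z e
      = (∑ f ∈ univ.filter (fun f : G.Dart => f.snd = e.fst), z f) - z e.symm := by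
  have : (nbMatrix G).mulVec z e
      = ∑ f : G.Dart, if f.snd = e.fst ∧ f.fst ≠ e.snd then z f else 0 := by
    simp [Matrix.mulVec, dotProduct, nbMatrix, ite_mul]
  rw [this, ← Finset.sum_filter, filter_eq_erase,
    Finset.sum_erase_eq_sub (by simp only [Finset.mem_filter, Finset.mem_univ, true_and]; rfl)]

/-- in-sum of a dart function -/
noncomputable def tV (G : SimpleGraph V) [DecidableRel G.Adj] (y : G.Dart → ℂ) (v : V) : ℂ :=
  ∑ e ∈ univ.filter (fun e : G.Dart => e.snd = v), y e

/-- out-sum of a dart function -/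
noncomputable def uV (G : SimpleGraph V) [DecidableRel G.Adj] (y : G.Dart → ℂ) (v : V) : ℂ :=
  ∑ e ∈ univ.filter (fun e : G.Dart => e.fst = v), y e

local notation "conj" => starRingEnd ℂ

section
variable {μ : ℂ} {y : G.Dart → ℂ}

lemma LA (Hy : ∀ e : G.Dart, tV G y e.fst - y e.symm = μ * y e) (v : V) :
    μ * uV G y v = ((G.degree v : ℂ) - 1) * tV G y v := by
  have h1 : ∑ e ∈ univ.filter (fun e : G.Dart => e.fst = v), (tV G y e.fst - y e.symm)
      = ∑ e ∈ univ.filter (fun e : G.Dart => e.fst = v), μ * y e :=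
    Finset.sum_congr rfl (fun e _ => Hy e)
  rw [Finset.sum_sub_distrib, sum_fiber_const_fst (tV G y) v, sum_fiber_symm' y v,
    ← Finset.mul_sum] at h1
  rw [← uV] at h1
  rw [← h1, tV]
  ring

lemma uV_eq (hμμ : μ * conj μ = 1)
    (Hy : ∀ e : G.Dart, tV G y e.fst - y e.symm = μ * y e) (v : V) :
    uV G y v = conj μ * (((G.degree v : ℂ) - 1) * tV G y v) := by
  have := LA Hy v
  linear_combination conj μ * this - uV G y v * hμμ

lemma LD (hdeg : ∀ u : V, 2 ≤ G.degree u) (hμμ : μ * conj μ = 1)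
    (Hy : ∀ e : G.Dart, tV G y e.fst - y e.symm = μ * y e) :
    ∀ v : V, 2 < G.degree v → tV G y v = 0 := by
  have hsy : ∀ e : G.Dart, y e.symm = tV G y e.fst - μ * y e :=
    fun e => by linear_combination - Hy e
  -- the Hermitian-norm identity
  have base : ∑ e : G.Dart, y e.symm * conj (y e.symm) = ∑ e : G.Dart, y e * conj (y e) :=
    sum_symm (fun e => y e * conj (y e))
  have expand : ∀ e : G.Dart, y e.symm * conj (y e.symm)
      = tV G y e.fst * conj (tV G y e.fst) - μ * (y e * conj (tV G y e.fst))
        - conj μ * (tV G y e.fst * conj (y e)) + y e * conj (y e) := by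
    intro e
    rw [hsy e]
    simp only [map_sub, _root_.map_mul]
    linear_combination (y e * conj (y e)) * hμμ
  rw [Finset.sum_congr rfl (fun e _ => expand e)] at base
  simp only [Finset.sum_add_distrib, Finset.sum_sub_distrib, ← Finset.mul_sum] at base
  -- identify the three dart sums as vertex sums
  have hA : ∑ e : G.Dart, tV G y e.fst * conj (tV G y e.fst)
      = ∑ v : V, (G.degree v : ℂ) * (tV G y v * conj (tV G y v)) := by
    rw [sum_group_fst (fun e => tV G y e.fst * conj (tV G y e.fst))]
    exact Finset.sum_congr rfl (fun v _ => sum_fiber_const_fst (fun w => tV G y w * conj (tV G y w)) v)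
  have hC1 : ∑ e : G.Dart, y e * conj (tV G y e.fst)
      = ∑ v : V, conj (tV G y v) * uV G y v := by
    rw [sum_group_fst (fun e => y e * conj (tV G y e.fst))]
    refine Finset.sum_congr rfl (fun v _ => ?_)
    rw [uV, Finset.mul_sum]
    exact Finset.sum_congr rfl (fun e he => by rw [(Finset.mem_filter.mp he).2]; ring
    )
  have hC2 : ∑ e : G.Dart, tV G y e.fst * conj (y e)
      = ∑ v : V, tV G y v * conj (uV G y v) := by
    rw [sum_group_fst (fun e => tV G y e.fst * conj (y e))]
    refine Finset.sum_congr rfl (fun v _ => ?_)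
    rw [uV, map_sum, Finset.mul_sum]
    exact Finset.sum_congr rfl (fun e he => by rw [(Finset.mem_filter.mp he).2])
  rw [hA, hC1, hC2] at base
  -- substitute uV
  have e1 : ∀ v : V, μ * (conj (tV G y v) * uV G y v)
      = ((G.degree v : ℂ) - 1) * (tV G y v * conj (tV G y v)) := by
    intro v
    rw [uV_eq hμμ Hy v]
    linear_combination (conj (tV G y v) * (((G.degree v:ℂ) - 1) * tV G y v)) * hμμ
  have e2 : ∀ v : V, conj μ * (tV G y v * conj (uV G y v))
      = ((G.degree v : ℂ) - 1) * (tV G y v * conj (tV G y v)) := by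
    intro v
    rw [uV_eq hμμ Hy v]
    simp only [_root_.map_mul, map_sub, _root_.map_one, Complex.conj_natCast, Complex.conj_conj]
    linear_combination (tV G y v * (((G.degree v:ℂ) - 1) * conj (tV G y v))) * hμμ
  have base0 : ∑ v : V, (G.degree v : ℂ) * (tV G y v * conj (tV G y v))
      - μ * ∑ v : V, conj (tV G y v) * uV G y v
      - conj μ * ∑ v : V, tV G y v * conj (uV G y v) = 0 := by
    linear_combination base
  have point : ∀ v : V, ((G.degree v : ℂ) - 2) * (tV G y v * conj (tV G y v))
      = μ * (conj (tV G y v) * uV G y v) + conj μ * (tV G y v * conj (uV G y v))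
        - (G.degree v : ℂ) * (tV G y v * conj (tV G y v)) := by
    intro v
    linear_combination - e1 v - e2 v
  have base2 : ∑ v : V, ((G.degree v : ℂ) - 2) * (tV G y v * conj (tV G y v)) = 0 := by
    rw [Finset.sum_congr rfl (fun v _ => point v)]
    simp only [Finset.sum_sub_distrib, Finset.sum_add_distrib, ← Finset.mul_sum]
    linear_combination - base0
  -- realify
  have base3 : (↑(∑ v : V, ((G.degree v : ℝ) - 2) * Complex.normSq (tV G y v)) : ℂ) = 0 := by
    push_cast
    rw [← base2]
    exact Finset.sum_congr rfl (fun v _ => by rw [Complex.mul_conj])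
  rw [Complex.ofReal_eq_zero] at base3
  have hnn : ∀ v ∈ univ, (0:ℝ) ≤ ((G.degree v : ℝ) - 2) * Complex.normSq (tV G y v) := by
    intro v _
    apply mul_nonneg _ (Complex.normSq_nonneg _)
    have h2 : (2:ℝ) ≤ (G.degree v : ℝ) := by exact_mod_cast hdeg v
    linarith
  have hz := (Finset.sum_eq_zero_iff_of_nonneg hnn).mp base3
  intro v hv
  have h0 := hz v (Finset.mem_univ v)
  have hdv : (0:ℝ) < (G.degree v : ℝ) - 2 := by
    have : (2:ℝ) < (G.degree v : ℝ) := by exact_mod_cast hv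
    linarith
  rcases mul_eq_zero.mp h0 with h | h
  · exact absurd h (ne_of_gt hdv)
  · exact Complex.normSq_eq_zero.mp h

lemma symm_fst (e : G.Dart) : e.symm.fst = e.snd := rfl
lemma symm_snd (e : G.Dart) : e.symm.snd = e.fst := rfl

lemma sum_mul_conj_eq_zero {ι : Type*} [Fintype ι] (z : ι → ℂ)
    (h : ∑ i : ι, z i * conj (z i) = 0) : ∀ i, z i = 0 := by
  have h2 : (↑(∑ i : ι, Complex.normSq (z i)) : ℂ) = 0 := by
    push_cast
    rw [← h]
    exact Finset.sum_congr rfl (fun i _ => (Complex.mul_conj (z i)).symm)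
  have h3 : ∑ i : ι, Complex.normSq (z i) = 0 := by exact_mod_cast h2
  intro i
  have := (Finset.sum_eq_zero_iff_of_nonneg
    (fun i _ => Complex.normSq_nonneg (z i))).mp h3 i (Finset.mem_univ i)
  exact Complex.normSq_eq_zero.mp this

lemma LM (hμμ : μ * conj μ = 1)
    (Hy : ∀ e : G.Dart, tV G y e.fst - y e.symm = μ * y e) (v : V) :
    μ * (∑ e ∈ univ.filter (fun e : G.Dart => e.snd = v), tV G y e.fst)
      = μ^2 * tV G y v + ((G.degree v : ℂ) - 1) * tV G y v := by
  have h1 : ∑ e ∈ univ.filter (fun e : G.Dart => e.snd = v), (tV G y e.fst - y e.symm)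
      = ∑ e ∈ univ.filter (fun e : G.Dart => e.snd = v), μ * y e :=
    Finset.sum_congr rfl (fun e _ => Hy e)
  rw [Finset.sum_sub_distrib, sum_fiber_symm y v, ← Finset.mul_sum] at h1
  have h2 := LA Hy v
  simp only [tV, uV] at h1 h2 ⊢
  linear_combination μ * h1 + h2

/-- AT_y is determined by t -/
lemma AT_eq (hμμ : μ * conj μ = 1)
    (Hy : ∀ e : G.Dart, tV G y e.fst - y e.symm = μ * y e) (v : V) :
    (∑ e ∈ univ.filter (fun e : G.Dart => e.snd = v), tV G y e.fst)
      = μ * tV G y v + conj μ * (((G.degree v : ℂ) - 1) * tV G y v) := by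
  have h := LM hμμ Hy v
  linear_combination conj μ * h
    + (μ * tV G y v - ∑ e ∈ univ.filter (fun e : G.Dart => e.snd = v), tV G y e.fst) * hμμ

lemma supp_t (hdeg : ∀ u : V, 2 ≤ G.degree u) (hμμ : μ * conj μ = 1)
    (Hy : ∀ e : G.Dart, tV G y e.fst - y e.symm = μ * y e) (z : V → ℂ) (v : V) :
    ((G.degree v : ℂ) - 1) * (z v * conj (tV G y v)) = z v * conj (tV G y v) := by
  rcases eq_or_lt_of_le (hdeg v) with h | h
  · have h2 : (G.degree v : ℂ) = 2 := by exact_mod_cast h.symm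
    rw [h2]; ring
  · rw [LD hdeg hμμ Hy v h]; simp

lemma supp_t' (hdeg : ∀ u : V, 2 ≤ G.degree u) (hμμ : μ * conj μ = 1)
    (Hy : ∀ e : G.Dart, tV G y e.fst - y e.symm = μ * y e) (z : V → ℂ) (v : V) :
    ((G.degree v : ℂ) - 1) * (tV G y v * conj (z v)) = tV G y v * conj (z v) := by
  rcases eq_or_lt_of_le (hdeg v) with h | h
  · have h2 : (G.degree v : ℂ) = 2 := by exact_mod_cast h.symm
    rw [h2]; ring
  · rw [LD hdeg hμμ Hy v h]; simp

lemma caseB (hdeg : ∀ u : V, 2 ≤ G.degree u) (hμμ : μ * conj μ = 1) (hne : conj μ ≠ μ)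
    {x : G.Dart → ℂ}
    (Hy : ∀ e : G.Dart, tV G y e.fst - y e.symm = μ * y e)
    (Hx : ∀ e : G.Dart, tV G x e.fst - x e.symm = μ * x e + y e) :
    y = 0 := by
  have hu := uV_eq hμμ Hy
  -- q in terms of p, t
  have hq : ∀ v : V, μ * uV G x v = ((G.degree v : ℂ) - 1) * tV G x v - uV G y v := by
    intro v
    have h1 : ∑ e ∈ univ.filter (fun e : G.Dart => e.fst = v), (tV G x e.fst - x e.symm)
        = ∑ e ∈ univ.filter (fun e : G.Dart => e.fst = v), (μ * x e + y e) :=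
      Finset.sum_congr rfl (fun e _ => Hx e)
    rw [Finset.sum_sub_distrib, sum_fiber_const_fst (tV G x) v, sum_fiber_symm' x v,
      Finset.sum_add_distrib, ← Finset.mul_sum] at h1
    simp only [tV, uV] at h1 ⊢
    linear_combination - h1
  -- μ * ATx in terms of p, t, u
  have hATx : ∀ v : V, μ * (∑ e ∈ univ.filter (fun e : G.Dart => e.snd = v), tV G x e.fst)
      = μ^2 * tV G x v + μ * tV G y v + (((G.degree v : ℂ) - 1) * tV G x v - uV G y v) := by
    intro v
    have h1 : ∑ e ∈ univ.filter (fun e : G.Dart => e.snd = v), (tV G x e.fst - x e.symm)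
        = ∑ e ∈ univ.filter (fun e : G.Dart => e.snd = v), (μ * x e + y e) :=
      Finset.sum_congr rfl (fun e _ => Hx e)
    rw [Finset.sum_sub_distrib, sum_fiber_symm x v, Finset.sum_add_distrib,
      ← Finset.mul_sum] at h1
    have h2 := hq v
    simp only [tV, uV] at h1 h2 ⊢
    linear_combination μ * h1 + h2
  -- double counting
  have step1 : ∑ v : V, (∑ e ∈ univ.filter (fun e : G.Dart => e.snd = v), tV G x e.fst)
        * conj (tV G y v)
      = ∑ v : V, tV G x v
        * conj (∑ e ∈ univ.filter (fun e : G.Dart => e.snd = v), tV G y e.fst) := by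
    have d1 : ∑ v : V, (∑ e ∈ univ.filter (fun e : G.Dart => e.snd = v), tV G x e.fst)
          * conj (tV G y v)
        = ∑ e : G.Dart, tV G x e.fst * conj (tV G y e.snd) := by
      rw [sum_group_snd (fun e : G.Dart => tV G x e.fst * conj (tV G y e.snd))]
      refine Finset.sum_congr rfl (fun v _ => ?_)
      rw [Finset.sum_mul]
      exact Finset.sum_congr rfl (fun e he => by rw [(Finset.mem_filter.mp he).2])
    have d2 : ∑ e : G.Dart, tV G x e.fst * conj (tV G y e.snd)
        = ∑ e : G.Dart, tV G x e.snd * conj (tV G y e.fst) := by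
      rw [← sum_symm (fun e : G.Dart => tV G x e.snd * conj (tV G y e.fst))]
      exact Finset.sum_congr rfl (fun e _ => rfl)
    have d3 : ∑ e : G.Dart, tV G x e.snd * conj (tV G y e.fst)
        = ∑ v : V, tV G x v
          * conj (∑ e ∈ univ.filter (fun e : G.Dart => e.snd = v), tV G y e.fst) := by
      rw [sum_group_snd (fun e : G.Dart => tV G x e.snd * conj (tV G y e.fst))]
      refine Finset.sum_congr rfl (fun v _ => ?_)
      rw [map_sum, Finset.mul_sum]
      exact Finset.sum_congr rfl (fun e he => by rw [(Finset.mem_filter.mp he).2])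
    rw [d1, d2, d3]
  -- conj of ATy
  have step2 : ∀ v : V,
      conj (∑ e ∈ univ.filter (fun e : G.Dart => e.snd = v), tV G y e.fst)
        = conj μ * conj (tV G y v) + μ * (((G.degree v : ℂ) - 1) * conj (tV G y v)) := by
    intro v
    rw [AT_eq hμμ Hy v]
    simp only [map_add, _root_.map_mul, map_sub, _root_.map_one, Complex.conj_natCast,
      Complex.conj_conj]
  have point1 : ∀ v : V,
      (μ * (∑ e ∈ univ.filter (fun e : G.Dart => e.snd = v), tV G x e.fst)) * conj (tV G y v)
        = μ^2 * (tV G x v * conj (tV G y v)) + μ * (tV G y v * conj (tV G y v))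
          + tV G x v * conj (tV G y v) - conj μ * (tV G y v * conj (tV G y v)) := by
    intro v
    rw [hATx v]
    linear_combination supp_t hdeg hμμ Hy (tV G x) v - conj (tV G y v) * hu v
      - conj μ * supp_t' hdeg hμμ Hy (tV G y) v
  have point2 : ∀ v : V,
      tV G x v * (μ * conj (∑ e ∈ univ.filter (fun e : G.Dart => e.snd = v), tV G y e.fst))
        = tV G x v * conj (tV G y v) + μ^2 * (tV G x v * conj (tV G y v)) := by
    intro v
    rw [step2 v]
    linear_combination (tV G x v * conj (tV G y v)) * hμμ
      + μ^2 * supp_t hdeg hμμ Hy (tV G x) v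
  have S1 : ∑ v : V,
      (μ * (∑ e ∈ univ.filter (fun e : G.Dart => e.snd = v), tV G x e.fst)) * conj (tV G y v)
        = μ^2 * (∑ v : V, tV G x v * conj (tV G y v))
          + μ * (∑ v : V, tV G y v * conj (tV G y v))
          + (∑ v : V, tV G x v * conj (tV G y v))
          - conj μ * (∑ v : V, tV G y v * conj (tV G y v)) := by
    rw [Finset.sum_congr rfl (fun v _ => point1 v)]
    simp only [Finset.sum_add_distrib, Finset.sum_sub_distrib, ← Finset.mul_sum]
  have S2 : ∑ v : V,
      tV G x v * (μ * conj (∑ e ∈ univ.filter (fun e : G.Dart => e.snd = v), tV G y e.fst))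
        = (∑ v : V, tV G x v * conj (tV G y v))
          + μ^2 * (∑ v : V, tV G x v * conj (tV G y v)) := by
    rw [Finset.sum_congr rfl (fun v _ => point2 v)]
    simp only [Finset.sum_add_distrib, ← Finset.mul_sum]
  have S3 : ∑ v : V,
      (μ * (∑ e ∈ univ.filter (fun e : G.Dart => e.snd = v), tV G x e.fst)) * conj (tV G y v)
        = ∑ v : V,
          tV G x v * (μ * conj (∑ e ∈ univ.filter (fun e : G.Dart => e.snd = v), tV G y e.fst)) := by
    have l1 : ∑ v : V,
        (μ * (∑ e ∈ univ.filter (fun e : G.Dart => e.snd = v), tV G x e.fst)) * conj (tV G y v)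
        = μ * ∑ v : V, (∑ e ∈ univ.filter (fun e : G.Dart => e.snd = v), tV G x e.fst)
          * conj (tV G y v) := by
      rw [Finset.mul_sum]
      exact Finset.sum_congr rfl (fun v _ => by ring)
    have l2 : ∑ v : V,
        tV G x v * (μ * conj (∑ e ∈ univ.filter (fun e : G.Dart => e.snd = v), tV G y e.fst))
        = μ * ∑ v : V, tV G x v
          * conj (∑ e ∈ univ.filter (fun e : G.Dart => e.snd = v), tV G y e.fst) := by
      rw [Finset.mul_sum]
      exact Finset.sum_congr rfl (fun v _ => by ring)
    rw [l1, l2, step1]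
  have Tzero : ∑ v : V, tV G y v * conj (tV G y v) = 0 := by
    have final : (μ - conj μ) * (∑ v : V, tV G y v * conj (tV G y v)) = 0 := by
      linear_combination S2 + S3 - S1
    rcases mul_eq_zero.mp final with h | h
    · exact absurd (sub_eq_zero.mp h).symm hne
    · exact h
  have hT : ∀ v : V, tV G y v = 0 := sum_mul_conj_eq_zero (tV G y) Tzero
  -- endgame
  have hys : ∀ e : G.Dart, y e.symm = -(μ * y e) := by
    intro e
    linear_combination hT e.fst - Hy e
  have pz : ∀ e : G.Dart, y e.symm * conj (y e) = -(μ * (y e * conj (y e))) := by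
    intro e; rw [hys e]; ring
  have pz2 : ∀ e : G.Dart, y e * conj (y e.symm) = -(conj μ * (y e * conj (y e))) := by
    intro e; rw [hys e]; simp only [map_neg, _root_.map_mul]; ring
  have Z1 : ∑ e : G.Dart, y e.symm * conj (y e)
      = -(μ * ∑ e : G.Dart, y e * conj (y e)) := by
    rw [Finset.sum_congr rfl (fun e _ => pz e), Finset.sum_neg_distrib, ← Finset.mul_sum]
  have Z2 : ∑ e : G.Dart, y e.symm * conj (y e)
      = ∑ e : G.Dart, y e * conj (y e.symm) := by
    rw [← sum_symm (fun e : G.Dart => y e * conj (y e.symm))]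
    exact Finset.sum_congr rfl (fun e _ => by rw [SimpleGraph.Dart.symm_symm])
  have Z3 : ∑ e : G.Dart, y e * conj (y e.symm)
      = -(conj μ * ∑ e : G.Dart, y e * conj (y e)) := by
    rw [Finset.sum_congr rfl (fun e _ => pz2 e), Finset.sum_neg_distrib, ← Finset.mul_sum]
  have Yzero : ∑ e : G.Dart, y e * conj (y e) = 0 := by
    have final : (μ - conj μ) * (∑ e : G.Dart, y e * conj (y e)) = 0 := by
      linear_combination Z1 - Z2 - Z3
    rcases mul_eq_zero.mp final with h | h
    · exact absurd (sub_eq_zero.mp h).symm hne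
    · exact h
  funext e
  exact sum_mul_conj_eq_zero y Yzero e

lemma caseA (hconn : G.Connected) (hdeg : ∀ u : V, 2 ≤ G.degree u)
    (hm : Fintype.card V < G.edgeFinset.card)
    (hμμ : μ * conj μ = 1) (hreal : conj μ = μ)
    {x : G.Dart → ℂ}
    (Hy : ∀ e : G.Dart, tV G y e.fst - y e.symm = μ * y e)
    (Hx : ∀ e : G.Dart, tV G x e.fst - x e.symm = μ * x e + y e) :
    y = 0 := by
  have hμ2 : μ * μ = 1 := by nth_rewrite 2 [← hreal]; exact hμμ
  have hμne : μ ≠ 0 := by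
    intro h; rw [h] at hμ2; simp at hμ2
  -- propagation of t along darts
  have prop : ∀ e : G.Dart, tV G y e.snd = μ * tV G y e.fst := by
    intro e
    have h1 := Hy e
    have h2 := Hy e.symm
    rw [SimpleGraph.Dart.symm_symm, symm_fst] at h2
    linear_combination h2 - μ * h1 - y e * hμ2
  -- a vertex of degree ≥ 3 exists
  have hv0 : ∃ v : V, 2 < G.degree v := by
    by_contra hc
    push_neg at hc
    have hsum := SimpleGraph.sum_degrees_eq_twice_card_edges G
    have hle : ∑ v : V, G.degree v ≤ ∑ _v : V, 2 := Finset.sum_le_sum (fun v _ => hc v)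
    rw [hsum, Finset.sum_const, Finset.card_univ, smul_eq_mul] at hle
    omega
  obtain ⟨v₀, hv₀⟩ := hv0
  have ht0 : tV G y v₀ = 0 := LD hdeg hμμ Hy v₀ hv₀
  have hadj : ∀ (a b : V), G.Adj a b → tV G y b = μ * tV G y a := by
    intro a b hab
    exact prop ⟨(a, b), hab⟩
  have hTall : ∀ v : V, tV G y v = 0 := by
    have hwalk : ∀ (a b : V), G.Walk a b → tV G y a = 0 → tV G y b = 0 := by
      intro a b w
      induction w with
      | nil => exact id
      | cons h p ih => exact fun h0 => ih (by rw [hadj _ _ h, h0, mul_zero])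
    intro v
    exact hwalk v₀ v (hconn.preconnected v₀ v).some ht0
  have hys : ∀ e : G.Dart, y e.symm = -(μ * y e) := fun e => by
    linear_combination hTall e.fst - Hy e
  -- dart-level equation for p
  have hyA : ∀ e : G.Dart, 2 * μ * y e = μ * tV G x e.fst - tV G x e.snd := by
    intro e
    have h1 := Hx e
    have h2 := Hx e.symm
    rw [SimpleGraph.Dart.symm_symm, symm_fst] at h2
    rw [hys e] at h2
    linear_combination (-μ) * h1 + h2 - x e * hμ2
  -- vertex-level: μ * ATx = d * p
  have hLAp : ∀ v : V, μ * (∑ e ∈ univ.filter (fun e : G.Dart => e.snd = v), tV G x e.fst)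
      = (G.degree v : ℂ) * tV G x v := by
    intro v
    have h1 : ∑ e ∈ univ.filter (fun e : G.Dart => e.snd = v), (2 * μ * y e)
        = ∑ e ∈ univ.filter (fun e : G.Dart => e.snd = v), (μ * tV G x e.fst - tV G x e.snd) :=
      Finset.sum_congr rfl (fun e _ => hyA e)
    rw [Finset.sum_sub_distrib, sum_fiber_const_snd (tV G x) v, ← Finset.mul_sum,
      ← Finset.mul_sum] at h1
    have h2 := hTall v
    simp only [tV] at h1 h2 ⊢
    linear_combination - h1 + (2*μ) * h2
  have hATp : ∀ v : V, (∑ e ∈ univ.filter (fun e : G.Dart => e.snd = v), tV G x e.fst)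
      = conj μ * ((G.degree v : ℂ) * tV G x v) := by
    intro v
    linear_combination conj μ * hLAp v
      - (∑ e ∈ univ.filter (fun e : G.Dart => e.snd = v), tV G x e.fst) * hμμ
  -- expansion of the final positive sum
  have pointS : ∀ e : G.Dart,
      (μ * tV G x e.fst - tV G x e.snd) * conj (μ * tV G x e.fst - tV G x e.snd)
        = tV G x e.fst * conj (tV G x e.fst) + tV G x e.snd * conj (tV G x e.snd)
          - μ * (tV G x e.fst * conj (tV G x e.snd))
          - conj μ * (conj (tV G x e.fst) * tV G x e.snd) := by
    intro e
    simp only [map_sub, _root_.map_mul]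
    linear_combination (tV G x e.fst * conj (tV G x e.fst)) * hμμ
  have A1 : ∑ e : G.Dart, tV G x e.fst * conj (tV G x e.fst)
      = ∑ v : V, (G.degree v : ℂ) * (tV G x v * conj (tV G x v)) := by
    rw [sum_group_fst (fun e : G.Dart => tV G x e.fst * conj (tV G x e.fst))]
    exact Finset.sum_congr rfl
      (fun v _ => sum_fiber_const_fst (fun w => tV G x w * conj (tV G x w)) v)
  have A2 : ∑ e : G.Dart, tV G x e.snd * conj (tV G x e.snd)
      = ∑ v : V, (G.degree v : ℂ) * (tV G x v * conj (tV G x v)) := by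
    rw [sum_group_snd (fun e : G.Dart => tV G x e.snd * conj (tV G x e.snd))]
    exact Finset.sum_congr rfl
      (fun v _ => sum_fiber_const_snd (fun w => tV G x w * conj (tV G x w)) v)
  have X1 : ∑ e : G.Dart, tV G x e.fst * conj (tV G x e.snd)
      = ∑ v : V, conj (tV G x v)
        * (∑ e ∈ univ.filter (fun e : G.Dart => e.snd = v), tV G x e.fst) := by
    rw [sum_group_snd (fun e : G.Dart => tV G x e.fst * conj (tV G x e.snd))]
    refine Finset.sum_congr rfl (fun v _ => ?_)
    rw [Finset.mul_sum]
    exact Finset.sum_congr rfl (fun e he => by rw [(Finset.mem_filter.mp he).2]; ring)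
  have X2 : ∑ e : G.Dart, conj (tV G x e.fst) * tV G x e.snd
      = ∑ v : V, conj (∑ e ∈ univ.filter (fun e : G.Dart => e.snd = v), tV G x e.fst)
        * tV G x v := by
    rw [sum_group_snd (fun e : G.Dart => conj (tV G x e.fst) * tV G x e.snd)]
    refine Finset.sum_congr rfl (fun v _ => ?_)
    rw [map_sum, Finset.sum_mul]
    exact Finset.sum_congr rfl (fun e he => by rw [(Finset.mem_filter.mp he).2])
  have e1 : ∀ v : V, μ * (conj (tV G x v)
        * (∑ e ∈ univ.filter (fun e : G.Dart => e.snd = v), tV G x e.fst))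
      = (G.degree v : ℂ) * (tV G x v * conj (tV G x v)) := by
    intro v
    rw [hATp v]
    linear_combination ((G.degree v : ℂ) * (tV G x v * conj (tV G x v))) * hμμ
  have e2 : ∀ v : V, conj μ * (conj (∑ e ∈ univ.filter (fun e : G.Dart => e.snd = v), tV G x e.fst)
        * tV G x v)
      = (G.degree v : ℂ) * (tV G x v * conj (tV G x v)) := by
    intro v
    rw [hATp v]
    simp only [_root_.map_mul, Complex.conj_natCast, Complex.conj_conj]
    linear_combination ((G.degree v : ℂ) * (tV G x v * conj (tV G x v))) * hμμ
  have m1 : μ * ∑ v : V, conj (tV G x v)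
        * (∑ e ∈ univ.filter (fun e : G.Dart => e.snd = v), tV G x e.fst)
      = ∑ v : V, (G.degree v : ℂ) * (tV G x v * conj (tV G x v)) := by
    rw [Finset.mul_sum]
    exact Finset.sum_congr rfl (fun v _ => e1 v)
  have m2 : conj μ * ∑ v : V, conj (∑ e ∈ univ.filter (fun e : G.Dart => e.snd = v), tV G x e.fst)
        * tV G x v
      = ∑ v : V, (G.degree v : ℂ) * (tV G x v * conj (tV G x v)) := by
    rw [Finset.mul_sum]
    exact Finset.sum_congr rfl (fun v _ => e2 v)
  have Szero : ∑ e : G.Dart, (μ * tV G x e.fst - tV G x e.snd)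
      * conj (μ * tV G x e.fst - tV G x e.snd) = 0 := by
    rw [Finset.sum_congr rfl (fun e _ => pointS e)]
    simp only [Finset.sum_add_distrib, Finset.sum_sub_distrib, ← Finset.mul_sum]
    rw [A1, A2, X1, X2]
    linear_combination - m1 - m2
  have hterm := sum_mul_conj_eq_zero (fun e : G.Dart => μ * tV G x e.fst - tV G x e.snd) Szero
  funext e
  have h := hyA e
  have h2 : (2 * μ) * y e = 0 := by
    have h3 : μ * tV G x e.fst - tV G x e.snd = 0 := hterm e
    linear_combination h + h3
  rcases mul_eq_zero.mp h2 with h4 | h4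
  · exact absurd h4 (mul_ne_zero two_ne_zero hμne)
  · simpa using h4

lemma hmu_of_abs (μ : ℂ) (hμ : ‖μ‖ = 1) : μ * conj μ = 1 := by
  rw [Complex.mul_conj, Complex.normSq_eq_norm_sq, hμ]
  norm_num

/-- main kernel statement at matrix level -/
lemma ker_key (hconn : G.Connected) (hdeg : ∀ u : V, 2 ≤ G.degree u)
    (hm : Fintype.card V < G.edgeFinset.card)
    (μ : ℂ) (hμ : ‖μ‖ = 1) (x : G.Dart → ℂ)
    (h : (nbMatrix G - μ • 1).mulVec ((nbMatrix G - μ • 1).mulVec x) = 0) :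
    (nbMatrix G - μ • 1).mulVec x = 0 := by
  have hμμ : μ * conj μ = 1 := hmu_of_abs μ hμ
  set y := (nbMatrix G - μ • 1).mulVec x with hy_def
  have hy_eq : ∀ e : G.Dart, y e = (nbMatrix G).mulVec x e - μ * x e := by
    intro e
    rw [hy_def, Matrix.sub_mulVec, Matrix.smul_mulVec, Matrix.one_mulVec]
    simp [smul_eq_mul]
  have h' : ∀ e : G.Dart, (nbMatrix G).mulVec y e - μ * y e = 0 := by
    intro e
    have := congrFun h e
    rw [Matrix.sub_mulVec, Matrix.smul_mulVec, Matrix.one_mulVec] at this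
    simpa [smul_eq_mul] using this
  have Hy : ∀ e : G.Dart, tV G y e.fst - y e.symm = μ * y e := by
    intro e
    have h2 := h' e
    rw [mulVec_nbMatrix] at h2
    simp only [tV]
    linear_combination h2
  have Hx : ∀ e : G.Dart, tV G x e.fst - x e.symm = μ * x e + y e := by
    intro e
    have h2 := hy_eq e
    rw [mulVec_nbMatrix] at h2
    simp only [tV]
    linear_combination - h2
  by_cases hreal : conj μ = μ
  · exact caseA hconn hdeg hm hμμ hreal Hy Hx
  · exact caseB hdeg hμμ hreal Hy Hx

lemma charpoly_sub_smul_one {n : Type*} [DecidableEq n] [Fintype n] (M : Matrix n n ℂ) (μ : ℂ) :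
    (M - μ • 1).charpoly = M.charpoly.comp (X + C μ) := by
  have hmap : Matrix.charmatrix (M - μ • (1 : Matrix n n ℂ))
      = (Matrix.charmatrix M).map (Polynomial.eval₂RingHom Polynomial.C (X + C μ)) := by
    ext i j
    rw [Matrix.map_apply]
    by_cases h : i = j
    · subst h
      rw [Matrix.charmatrix_apply_eq, Matrix.charmatrix_apply_eq]
      rw [Polynomial.coe_eval₂RingHom, Polynomial.eval₂_sub, Polynomial.eval₂_X,
        Polynomial.eval₂_C]
      simp only [Matrix.sub_apply, Matrix.smul_apply, Matrix.one_apply_eq, smul_eq_mul, mul_one,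
        Polynomial.C_sub]
      ring
    · rw [Matrix.charmatrix_apply_ne _ _ _ h, Matrix.charmatrix_apply_ne _ _ _ h]
      rw [Polynomial.coe_eval₂RingHom, Polynomial.eval₂_neg, Polynomial.eval₂_C]
      simp [Matrix.sub_apply, Matrix.one_apply_ne h]
  rw [Matrix.charpoly, Matrix.charpoly, hmap, ← RingHom.mapMatrix_apply, ← RingHom.map_det]
  rfl

end
end NBAux

end NBAuxSection

open NBAux in
/-- If every vertex has degree at least `2` and `m > n`, then no eigenvalue
of modulus `1` is defective: its algebraic multiplicity equals its geometric multiplicity,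
equivalently `ker((B − λI)²) = ker(B − λI)`. -/
theorem nbMatrix_unit_eigenvalue_not_defective
    [DecidableEq V] [Fintype V] (G : SimpleGraph V) [DecidableRel G.Adj]
    (hconn : G.Connected) (hdeg : ∀ u : V, 2 ≤ G.degree u)
    (hm : Fintype.card V < G.edgeFinset.card)
    (μ : ℂ) (hμ : ‖μ‖ = 1) :
    (nbMatrix G).charpoly.rootMultiplicity μ
      = Module.finrank ℂ ↥(LinearMap.ker (nbMatrix G - μ • 1).mulVecLin) ∧
    LinearMap.ker (((nbMatrix G - μ • 1) ^ 2).mulVecLin)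
      = LinearMap.ker ((nbMatrix G - μ • 1).mulVecLin) := by
  classical
  have part2 : LinearMap.ker (((nbMatrix G - μ • 1) ^ 2).mulVecLin)
      = LinearMap.ker ((nbMatrix G - μ • 1).mulVecLin) := by
    ext x
    simp only [LinearMap.mem_ker, Matrix.mulVecLin_apply]
    constructor
    · intro hx
      apply NBAux.ker_key hconn hdeg hm μ hμ x
      rw [Matrix.mulVec_mulVec, ← pow_two]
      exact hx
    · intro hx
      rw [pow_two, ← Matrix.mulVec_mulVec, hx, Matrix.mulVec_zero]
  have hker2 : ∀ (k : ℕ), 1 ≤ k →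
      LinearMap.ker ((nbMatrix G - μ • 1).mulVecLin ^ k)
        = LinearMap.ker ((nbMatrix G - μ • 1).mulVecLin) := by
    intro k hk
    induction k with
    | zero => omega
    | succ k ih =>
      rcases Nat.eq_or_lt_of_le hk with h1 | h1
      · rw [← h1, pow_one]
      · have hk1 : 1 ≤ k := by omega
        have ih' := ih hk1
        ext z
        simp only [LinearMap.mem_ker]
        constructor
        · intro hz
          have h2 : ((nbMatrix G - μ • 1).mulVecLin ^ k) ((nbMatrix G - μ • 1).mulVecLin z)
              = 0 := by
            rw [← Module.End.mul_apply, ← pow_succ]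
            exact hz
          have h3 : (nbMatrix G - μ • 1).mulVecLin ((nbMatrix G - μ • 1).mulVecLin z) = 0 := by
            have : (nbMatrix G - μ • 1).mulVecLin z
                ∈ LinearMap.ker ((nbMatrix G - μ • 1).mulVecLin ^ k) := h2
            rw [ih'] at this
            exact this
          have h4 : z ∈ LinearMap.ker (((nbMatrix G - μ • 1) ^ 2).mulVecLin) := by
            rw [LinearMap.mem_ker, pow_two, Matrix.mulVecLin_mul, LinearMap.comp_apply]
            exact h3
          rw [part2] at h4
          exact h4
        · intro hz
          rw [pow_succ, Module.End.mul_apply, hz, map_zero]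
  have hmax : Module.End.maxGenEigenspace ((nbMatrix G - μ • 1).mulVecLin) 0
      = LinearMap.ker ((nbMatrix G - μ • 1).mulVecLin) := by
    ext z
    rw [Module.End.mem_maxGenEigenspace]
    simp only [zero_smul, sub_zero]
    constructor
    · rintro ⟨k, hk⟩
      rcases Nat.eq_zero_or_pos k with h0 | h0
      · subst h0
        rw [pow_zero, Module.End.one_apply] at hk
        rw [hk]
        exact Submodule.zero_mem _
      · have := hker2 k h0
        rw [← this]
        exact hk
    · intro hz
      exact ⟨1, by rw [pow_one]; exact LinearMap.mem_ker.mp hz⟩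
  have hfr := LinearMap.finrank_maxGenEigenspace_zero_eq ((nbMatrix G - μ • 1).mulVecLin)
  rw [hmax] at hfr
  have hch : LinearMap.charpoly ((nbMatrix G - μ • 1).mulVecLin : Module.End ℂ (G.Dart → ℂ))
      = (nbMatrix G - μ • 1).charpoly := by
    rw [← LinearMap.charpoly_toMatrix ((nbMatrix G - μ • 1).mulVecLin) (Pi.basisFun ℂ G.Dart)]
    congr 1
    rw [LinearMap.toMatrix_eq_toMatrix', ← Matrix.toLin'_apply', LinearMap.toMatrix'_toLin']
  refine ⟨?_, part2⟩
  rw [Polynomial.rootMultiplicity_eq_natTrailingDegree,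
    ← NBAux.charpoly_sub_smul_one (nbMatrix G) μ, ← hch, ← hfr]
end
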